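/- Let M be a finite matroid on ground set E with nonnegative weights w : E → ℝ≥0, let p ∈ [0,1], and let τ be a positive integer. Suppose I_1, …, I_τ ⊆ E are sets such that for each t ∈ {1,…,τ}, I_t is a maximum-w-weight independent set of the deletion minor M \ (I_1 ∪ … ∪ I_{t−1}), and let Q = I_1 ∪ … ∪ I_τ. Then |Q| ≤ τ · Rank(M), and E[ max{ w(T) : T ⊆ Q ∩ R, T independent in M } ] ≥ (1 − (1−p)^τ) · E[ max{ w(T) : T ⊆ R, T independent in M } ]. In particular, taking τ = ⌈(1/p)·log(1/ε)⌉ gives an expected approximation factor of at least 1 − ε. -/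
import Mathlib


open Finset

noncomputable section

variable {E : Type*} [Fintype E] [DecidableEq E]

/-- Probability that an independent-inclusion random subset of `E`, in which each element `e`
is included independently with probability `π e`, is exactly the set `A`. -/
def prodWeight (π : E → ℝ) (A : Finset E) : ℝ :=
  (∏ e ∈ A, π e) * ∏ e ∈ Aᶜ, (1 - π e)

/-- Expectation of `g` under the independent-inclusion random subset with marginals `π`. -/
def expec (π : E → ℝ) (g : Finset E → ℝ) : ℝ :=
  ∑ A : Finset E, prodWeight π A * g A

/-- Total (additive) weight of a finite set. -/
def setWeight (w : E → ℝ) (T : Finset E) : ℝ := ∑ e ∈ T, w e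

/-- Value of a best feasible (w.r.t. `𝓘`) subset of `S`, for the objective `f`. -/
def bestVal (𝓘 : Set (Finset E)) (f : Finset E → ℝ) (S : Finset E) : ℝ :=
  sSup (f '' {T | T ⊆ S ∧ T ∈ 𝓘})

/-- A (finite) matroid on the ground set `E`, given by its independent sets. -/
structure FinMatroid (E : Type*) [Fintype E] [DecidableEq E] where
  Indep : Finset E → Prop
  empty_indep : Indep ∅
  indep_subset : ∀ ⦃S T : Finset E⦄, Indep T → S ⊆ T → Indep S
  indep_exchange : ∀ ⦃S T : Finset E⦄, Indep S → Indep T → S.card < T.card →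
    ∃ e ∈ T, e ∉ S ∧ Indep (insert e S)

/-- The rank function of a matroid: the maximum cardinality of an independent subset of `S`. -/
def FinMatroid.rank (M : FinMatroid E) (S : Finset E) : ℕ :=
  sSup {n | ∃ T ⊆ S, M.Indep T ∧ T.card = n}

/-- `I_1 ∪ ⋯ ∪ I_j` (sets are indexed starting from `1`). -/
def prefixUnion (I : ℕ → Finset E) (j : ℕ) : Finset E :=
  (Finset.Icc 1 j).biUnion I

/-- A nested system of spanning sets for the set system on ground set `G` with rank
function `rk`: each `I_j` lies outside `I_{1:j-1}` and is spanning (full rank) in the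
deletion minor obtained by removing `I_{1:j-1}` from `G`. -/
def IsNSS (rk : Finset E → ℕ) (G : Finset E) (τ : ℕ) (I : ℕ → Finset E) : Prop :=
  ∀ j ∈ Finset.Icc 1 τ,
    I j ⊆ G \ prefixUnion I (j - 1) ∧ rk (I j) = rk (G \ prefixUnion I (j - 1))

/-- `I` is a maximum-`w`-weight independent set of the restriction of `M` to `G`. -/
def IsMaxWeightIndep (M : FinMatroid E) (w : E → ℝ) (G : Finset E) (I : Finset E) : Prop :=
  I ⊆ G ∧ M.Indep I ∧ ∀ J ⊆ G, M.Indep J → setWeight w J ≤ setWeight w I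

/-- `I` is a maximum-`w`-weight base of the restriction (deletion minor) of `M` to `G`. -/
def IsMaxWeightBase (M : FinMatroid E) (w : E → ℝ) (G : Finset E) (I : Finset E) : Prop :=
  I ⊆ G ∧ M.Indep I ∧ M.rank I = M.rank G ∧
    ∀ J ⊆ G, M.Indep J → M.rank J = M.rank G → setWeight w J ≤ setWeight w I



attribute [local instance] Classical.propDecidable

namespace Dev

variable {M : FinMatroid E}


variable (M : FinMatroid E)

/-- rank: max cardinality of an independent subset of `X`. -/
def mrk (X : Finset E) : ℕ :=
  ((X.powerset.filter M.Indep).image Finset.card).max'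
    ⟨0, mem_image.2 ⟨∅, mem_filter.2 ⟨mem_powerset.2 (empty_subset X), M.empty_indep⟩, rfl⟩⟩

variable {M}

lemma card_le_mrk {T X : Finset E} (hT : M.Indep T) (hTX : T ⊆ X) : T.card ≤ mrk M X :=
  Finset.le_max' _ _ (mem_image.2 ⟨T, mem_filter.2 ⟨mem_powerset.2 hTX, hT⟩, rfl⟩)

lemma exists_mrk_set (X : Finset E) : ∃ B, B ⊆ X ∧ M.Indep B ∧ B.card = mrk M X := by
  have h := Finset.max'_mem ((X.powerset.filter M.Indep).image Finset.card)
    ⟨0, mem_image.2 ⟨∅, mem_filter.2 ⟨mem_powerset.2 (empty_subset X), M.empty_indep⟩, rfl⟩⟩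
  rw [mem_image] at h
  obtain ⟨B, hB, hBc⟩ := h
  rw [mem_filter, mem_powerset] at hB
  exact ⟨B, hB.1, hB.2, hBc⟩

lemma mrk_mono {X Y : Finset E} (h : X ⊆ Y) : mrk M X ≤ mrk M Y := by
  obtain ⟨B, hBX, hBi, hBc⟩ := exists_mrk_set (M := M) X
  exact hBc ▸ card_le_mrk hBi (hBX.trans h)

lemma mrk_le_card (X : Finset E) : mrk M X ≤ X.card := by
  obtain ⟨B, hBX, _, hBc⟩ := exists_mrk_set (M := M) X
  exact hBc ▸ Finset.card_le_card hBX

lemma mrk_of_indep {X : Finset E} (h : M.Indep X) : mrk M X = X.card :=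
  le_antisymm (mrk_le_card X) (card_le_mrk h Subset.rfl)

lemma indep_of_mrk_eq_card {X : Finset E} (h : mrk M X = X.card) : M.Indep X := by
  obtain ⟨B, hBX, hBi, hBc⟩ := exists_mrk_set (M := M) X
  have : B = X := Finset.eq_of_subset_of_card_le hBX (by omega)
  exact this ▸ hBi

lemma mrk_empty : mrk M ∅ = 0 :=
  Nat.le_zero.1 ((mrk_le_card (M := M) ∅).trans (by simp))

lemma mrk_insert_le (X : Finset E) (e : E) : mrk M (insert e X) ≤ mrk M X + 1 := by
  obtain ⟨B, hBX, hBi, hBc⟩ := exists_mrk_set (M := M) (insert e X)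
  have h1 : B.erase e ⊆ X := fun x hx => by
    have := hBX (Finset.erase_subset _ _ hx)
    rcases Finset.mem_insert.1 this with h | h
    · exact absurd h (Finset.ne_of_mem_erase hx)
    · exact h
  have h2 : (B.erase e).card ≤ mrk M X :=
    card_le_mrk (M.indep_subset hBi (Finset.erase_subset _ _)) h1
  have h3 : B.card ≤ (B.erase e).card + 1 := by
    by_cases he : e ∈ B
    · rw [Finset.card_erase_of_mem he]; omega
    · rw [Finset.erase_eq_of_notMem he]; omega
  omega

/-- `B` is a maximal independent subset of `X`. -/
def IsMaxIn (M : FinMatroid E) (B X : Finset E) : Prop :=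
  B ⊆ X ∧ M.Indep B ∧ ∀ e ∈ X, e ∉ B → ¬ M.Indep (insert e B)

lemma exists_maxIn_extending {S X : Finset E} (hS : M.Indep S) (hSX : S ⊆ X) :
    ∃ B, S ⊆ B ∧ IsMaxIn M B X := by
  classical
  set Ω := X.powerset.filter (fun B => M.Indep B ∧ S ⊆ B) with hΩ
  have hne : Ω.Nonempty := ⟨S, mem_filter.2 ⟨mem_powerset.2 hSX, hS, Subset.rfl⟩⟩
  obtain ⟨B, hBΩ, hBmax⟩ := Finset.exists_max_image Ω Finset.card hne
  rw [hΩ, mem_filter, mem_powerset] at hBΩ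
  refine ⟨B, hBΩ.2.2, hBΩ.1, hBΩ.2.1, fun e he heB hcon => ?_⟩
  have hmem : insert e B ∈ Ω := mem_filter.2 ⟨mem_powerset.2 (Finset.insert_subset he hBΩ.1),
    hcon, hBΩ.2.2.trans (Finset.subset_insert _ _)⟩
  have := hBmax _ hmem
  rw [Finset.card_insert_of_notMem heB] at this
  omega

lemma IsMaxIn.card_eq {B X : Finset E} (h : IsMaxIn M B X) : B.card = mrk M X := by
  refine le_antisymm (card_le_mrk h.2.1 h.1) ?_
  by_contra hlt
  push_neg at hlt
  obtain ⟨T, hTX, hTi, hTc⟩ := exists_mrk_set (M := M) X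
  obtain ⟨e, heT, heB, hei⟩ := M.indep_exchange h.2.1 hTi (by omega)
  exact h.2.2 e (hTX heT) heB hei

lemma mrk_insert_eq_of_subset {X Z : Finset E} (s : E) (hXZ : X ⊆ Z)
    (h : mrk M (insert s X) = mrk M X) : mrk M (insert s Z) = mrk M Z := by
  by_cases hsZ : s ∈ Z
  · rw [Finset.insert_eq_self.2 hsZ]
  have hsX : s ∉ X := fun hs => hsZ (hXZ hs)
  obtain ⟨BX, -, hBX⟩ := exists_maxIn_extending (M := M) M.empty_indep (empty_subset X)
  obtain ⟨BZ, hBXBZ, hBZ⟩ := exists_maxIn_extending hBX.2.1 (hBX.1.trans hXZ)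
  have hkey : ¬ M.Indep (insert s BZ) := by
    intro hcon
    have h1 : M.Indep (insert s BX) :=
      M.indep_subset hcon (Finset.insert_subset_insert _ hBXBZ)
    have h2 : insert s BX ⊆ insert s X := Finset.insert_subset_insert _ hBX.1
    have h3 : (insert s BX).card ≤ mrk M (insert s X) := card_le_mrk h1 h2
    have h4 : s ∉ BX := fun hs => hsX (hBX.1 hs)
    rw [Finset.card_insert_of_notMem h4, hBX.card_eq] at h3
    omega
  have hmax : IsMaxIn M BZ (insert s Z) := by
    refine ⟨hBZ.1.trans (Finset.subset_insert _ _), hBZ.2.1, fun e he heB => ?_⟩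
    rcases Finset.mem_insert.1 he with rfl | he'
    · exact hkey
    · exact hBZ.2.2 e he' heB
  rw [← hmax.card_eq, hBZ.card_eq]

lemma mrk_union_eq_of_forall {X Y : Finset E} (h : ∀ y ∈ Y, mrk M (insert y X) = mrk M X) :
    mrk M (X ∪ Y) = mrk M X := by
  obtain ⟨BX, -, hBX⟩ := exists_maxIn_extending (M := M) M.empty_indep (empty_subset X)
  have hmax : IsMaxIn M BX (X ∪ Y) := by
    refine ⟨hBX.1.trans Finset.subset_union_left, hBX.2.1, fun e he heB hcon => ?_⟩
    by_cases heX : e ∈ X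
    · exact hBX.2.2 e heX heB hcon
    · rcases Finset.mem_union.1 he with h' | heY
      · exact heX h'
      · have h3 : (insert e BX).card ≤ mrk M (insert e X) :=
          card_le_mrk hcon (Finset.insert_subset_insert _ hBX.1)
        have h4 : e ∉ BX := fun hs => heX (hBX.1 hs)
        rw [Finset.card_insert_of_notMem h4, hBX.card_eq, h e heY] at h3
        omega
  rw [← hmax.card_eq, hBX.card_eq]

lemma mrk_union_congr {X Y W : Finset E} (hXY : X ⊆ Y) (h : mrk M X = mrk M Y) :
    mrk M (X ∪ W) = mrk M (Y ∪ W) := by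
  have hy : ∀ y ∈ Y, mrk M (insert y X) = mrk M X := by
    intro y hy
    refine le_antisymm ?_ (mrk_mono (Finset.subset_insert _ _))
    calc mrk M (insert y X) ≤ mrk M Y := mrk_mono (Finset.insert_subset hy hXY)
    _ = mrk M X := h.symm
  have hy2 : ∀ y ∈ Y, mrk M (insert y (X ∪ W)) = mrk M (X ∪ W) := fun y hyY =>
    mrk_insert_eq_of_subset y Finset.subset_union_left (hy y hyY)
  have h6 : mrk M ((X ∪ W) ∪ Y) = mrk M (X ∪ W) := mrk_union_eq_of_forall hy2
  refine le_antisymm (mrk_mono (Finset.union_subset_union hXY Subset.rfl)) ?_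
  calc mrk M (Y ∪ W) ≤ mrk M ((X ∪ W) ∪ Y) := mrk_mono (by
        intro x hx; rcases Finset.mem_union.1 hx with h' | h'
        · exact Finset.mem_union_right _ h'
        · exact Finset.mem_union_left _ (Finset.mem_union_right _ h'))
  _ = mrk M (X ∪ W) := h6

lemma mrk_insert_dep {X : Finset E} {e : E} (hX : M.Indep X) (hdep : ¬ M.Indep (insert e X)) :
    mrk M (insert e X) = mrk M X := by
  have heX : e ∉ X := fun h => hdep (by rwa [Finset.insert_eq_self.2 h])
  rw [mrk_of_indep hX]
  refine le_antisymm ?_ (by simpa [mrk_of_indep hX] using mrk_mono (M := M) (Finset.subset_insert e X))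
  by_contra hlt
  push_neg at hlt
  have h1 : mrk M (insert e X) ≤ X.card + 1 := by
    simpa [Finset.card_insert_of_notMem heX] using mrk_le_card (M := M) (insert e X)
  have h2 : mrk M (insert e X) = (insert e X).card := by
    rw [Finset.card_insert_of_notMem heX]; omega
  exact hdep (indep_of_mrk_eq_card h2)

lemma mrk_insert_submod {X Y : Finset E} (e : E) (hXY : X ⊆ Y) :
    mrk M (insert e Y) + mrk M X ≤ mrk M Y + mrk M (insert e X) := by
  by_cases h : mrk M (insert e X) = mrk M X
  · rw [mrk_insert_eq_of_subset e hXY h]; omega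
  · have h1 : mrk M X ≤ mrk M (insert e X) := mrk_mono (Finset.subset_insert _ _)
    have h2 : mrk M (insert e Y) ≤ mrk M Y + 1 := mrk_insert_le Y e
    omega



lemma exists_min_dep {S : Finset E} {x : E} (hS : M.Indep S) (hdep : ¬ M.Indep (insert x S)) :
    ∃ C, C ⊆ S ∧ ¬ M.Indep (insert x C) ∧ ∀ D ⊆ S, D.card < C.card → M.Indep (insert x D) := by
  classical
  set Ω := S.powerset.filter (fun C => ¬ M.Indep (insert x C)) with hΩ
  have hne : Ω.Nonempty := ⟨S, mem_filter.2 ⟨mem_powerset.2 Subset.rfl, hdep⟩⟩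
  obtain ⟨C, hCΩ, hCmin⟩ := Finset.exists_min_image Ω Finset.card hne
  rw [hΩ, mem_filter, mem_powerset] at hCΩ
  refine ⟨C, hCΩ.1, hCΩ.2, fun D hDS hDc => ?_⟩
  by_contra hcon
  have : D ∈ Ω := mem_filter.2 ⟨mem_powerset.2 hDS, hcon⟩
  have := hCmin D this
  omega

lemma exchange_left {S C : Finset E} {x s : E} (hS : M.Indep S) (hxS : x ∉ S)
    (hCS : C ⊆ S) (hCdep : ¬ M.Indep (insert x C))
    (hmin : ∀ D ⊆ S, D.card < C.card → M.Indep (insert x D)) (hs : s ∈ C) :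
    M.Indep (insert x (S.erase s)) := by
  have hsS : s ∈ S := hCS hs
  have hxC : x ∉ C := fun h => hxS (hCS h)
  have hCind : M.Indep C := M.indep_subset hS hCS
  set X := insert x (C.erase s) with hX
  have hXind : M.Indep X :=
    hmin _ ((Finset.erase_subset _ _).trans hCS) (Finset.card_erase_lt_of_mem hs)
  have hins : insert s X = insert x C := by
    rw [hX, Finset.insert_comm, Finset.insert_erase hs]
  have hrk1 : mrk M (insert x C) = mrk M C := mrk_insert_dep hCind hCdep
  have hXcard : X.card = C.card := by
    rw [hX, Finset.card_insert_of_notMem (fun h => hxC (Finset.erase_subset _ _ h)),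
      Finset.card_erase_of_mem hs]
    have : 1 ≤ C.card := Finset.card_pos.2 ⟨s, hs⟩
    omega
  have hrk2 : mrk M (insert s X) = mrk M X := by
    rw [hins, hrk1, mrk_of_indep hCind, mrk_of_indep hXind, hXcard]
  set Z := insert x (S.erase s) with hZ
  have hXZ : X ⊆ Z := Finset.insert_subset_insert _ (Finset.erase_subset_erase _ hCS)
  have hrk3 : mrk M (insert s Z) = mrk M Z := mrk_insert_eq_of_subset s hXZ hrk2
  have hins2 : insert s Z = insert x S := by
    rw [hZ, Finset.insert_comm, Finset.insert_erase hsS]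
  have hrk4 : mrk M (insert x S) = mrk M S := mrk_insert_dep hS (by
    intro hcon; exact hCdep (M.indep_subset hcon (Finset.insert_subset_insert _ hCS)))
  have hZcard : Z.card = S.card := by
    rw [hZ, Finset.card_insert_of_notMem (fun h => hxS (Finset.erase_subset _ _ h)),
      Finset.card_erase_of_mem hsS]
    have : 1 ≤ S.card := Finset.card_pos.2 ⟨s, hsS⟩
    omega
  have : mrk M Z = Z.card := by
    rw [hZcard, ← mrk_of_indep hS, ← hrk4, ← hins2, hrk3]
  exact indep_of_mrk_eq_card this

lemma exchange_right {T C : Finset E} {x : E} (hT : M.Indep T) (hxT : x ∈ T)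
    (hC : M.Indep C) (hCdep : ¬ M.Indep (insert x C)) :
    ∃ s ∈ C, s ∉ T ∧ M.Indep (insert s (T.erase x)) := by
  have hxC : x ∉ C := fun h => hCdep (by rwa [Finset.insert_eq_self.2 h])
  by_contra hcon
  push_neg at hcon
  have hTe : M.Indep (T.erase x) := M.indep_subset hT (Finset.erase_subset _ _)
  have hstep : ∀ s ∈ C, mrk M (insert s (T.erase x)) = mrk M (T.erase x) := by
    intro s hsC
    by_cases hsT : s ∈ T.erase x
    · rw [Finset.insert_eq_self.2 hsT]
    by_cases hsT' : s ∈ T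
    · exfalso
      have : s = x := by
        by_contra hne
        exact hsT (Finset.mem_erase.2 ⟨hne, hsT'⟩)
      exact hxC (this ▸ hsC)
    · exact mrk_insert_dep hTe (hcon s hsC hsT')
  have h6 : mrk M ((T.erase x) ∪ C) = mrk M (T.erase x) := mrk_union_eq_of_forall hstep
  have h7 : mrk M (insert x C) = mrk M C := mrk_insert_dep hC hCdep
  have h8 : mrk M (insert x ((T.erase x) ∪ C)) = mrk M ((T.erase x) ∪ C) :=
    mrk_insert_eq_of_subset x Finset.subset_union_right h7
  have h9 : T ⊆ insert x ((T.erase x) ∪ C) := by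
    intro t ht
    by_cases htx : t = x
    · exact htx ▸ Finset.mem_insert_self _ _
    · exact Finset.mem_insert_of_mem (Finset.mem_union_left _ (Finset.mem_erase.2 ⟨htx, ht⟩))
  have h10 : T.card ≤ mrk M (insert x ((T.erase x) ∪ C)) := card_le_mrk hT h9
  rw [h8, h6, mrk_of_indep hTe, Finset.card_erase_of_mem hxT] at h10
  have : 1 ≤ T.card := Finset.card_pos.2 ⟨x, hxT⟩
  omega


lemma IsMaxIn_def {B X : Finset E} : IsMaxIn M B X ↔
    (B ⊆ X ∧ M.Indep B ∧ ∀ e ∈ X, e ∉ B → ¬ M.Indep (insert e B)) := Iff.rfl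


-- setWeight basics
lemma sw_nonneg {w : E → ℝ} (hw : ∀ e, 0 ≤ w e) (T : Finset E) : 0 ≤ setWeight w T :=
  Finset.sum_nonneg fun e _ => hw e

lemma sw_mono {w : E → ℝ} (hw : ∀ e, 0 ≤ w e) {T T' : Finset E} (h : T ⊆ T') :
    setWeight w T ≤ setWeight w T' :=
  Finset.sum_le_sum_of_subset_of_nonneg h fun e _ _ => hw e

lemma sw_insert {w : E → ℝ} {T : Finset E} {e : E} (h : e ∉ T) :
    setWeight w (insert e T) = w e + setWeight w T := Finset.sum_insert h

lemma sw_erase {w : E → ℝ} {T : Finset E} {e : E} (h : e ∈ T) :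
    setWeight w (T.erase e) = setWeight w T - w e := Finset.sum_erase_eq_sub h

/-- best value of an independent subset -/
def optW (M : FinMatroid E) (w : E → ℝ) : Finset E → ℝ :=
  bestVal {T | M.Indep T} (setWeight w)

lemma exists_optW (M : FinMatroid E) (w : E → ℝ) (S : Finset E) :
    ∃ T, T ⊆ S ∧ M.Indep T ∧ setWeight w T = optW M w S ∧
      ∀ T' ⊆ S, M.Indep T' → setWeight w T' ≤ setWeight w T := by
  classical
  set Ω := S.powerset.filter M.Indep with hΩ
  have hne : Ω.Nonempty := ⟨∅, mem_filter.2 ⟨mem_powerset.2 (empty_subset S), M.empty_indep⟩⟩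
  obtain ⟨T, hTΩ, hTmax⟩ := Finset.exists_max_image Ω (setWeight w) hne
  rw [hΩ, mem_filter, mem_powerset] at hTΩ
  have hmax : ∀ T' ⊆ S, M.Indep T' → setWeight w T' ≤ setWeight w T := fun T' h1 h2 =>
    hTmax T' (mem_filter.2 ⟨mem_powerset.2 h1, h2⟩)
  refine ⟨T, hTΩ.1, hTΩ.2, le_antisymm ?_ ?_, hmax⟩
  · exact le_csSup (Set.Finite.bddAbove (Set.toFinite _)) ⟨T, ⟨hTΩ.1, hTΩ.2⟩, rfl⟩
  · apply Real.sSup_le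
    · rintro y ⟨T', ⟨hT'S, hT'i⟩, rfl⟩
      exact hmax T' hT'S hT'i
    · exact le_trans (le_of_eq (by simp [setWeight]))
        (hmax ∅ (empty_subset S) M.empty_indep)

lemma le_optW {w : E → ℝ} {T S : Finset E} (hTS : T ⊆ S) (hT : M.Indep T) :
    setWeight w T ≤ optW M w S := by
  obtain ⟨T', _, _, hval, hmax⟩ := exists_optW M w S
  exact (hmax T hTS hT).trans (le_of_eq hval)

lemma optW_le {w : E → ℝ} {S : Finset E} {c : ℝ}
    (h : ∀ T ⊆ S, M.Indep T → setWeight w T ≤ c) : optW M w S ≤ c := by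
  obtain ⟨T, hTS, hTi, hval, _⟩ := exists_optW M w S
  exact hval ▸ h T hTS hTi

lemma optW_nonneg (M : FinMatroid E) (w : E → ℝ) (S : Finset E) : 0 ≤ optW M w S := by
  have := le_optW (M := M) (w := w) (empty_subset S) M.empty_indep
  simpa [setWeight] using this

lemma optW_mono {w : E → ℝ} {S S' : Finset E} (h : S ⊆ S') : optW M w S ≤ optW M w S' := by
  obtain ⟨T, hTS, hTi, hval, _⟩ := exists_optW M w S
  exact hval ▸ le_optW (hTS.trans h) hTi

lemma optW_empty (M : FinMatroid E) (w : E → ℝ) : optW M w ∅ = 0 := by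
  refine le_antisymm (optW_le fun T hT _ => ?_) (optW_nonneg M w ∅)
  rw [Finset.subset_empty.1 hT]
  simp [setWeight]

lemma optW_union_of_max {w : E → ℝ} {G I₁ X : Finset E}
    (hmax : IsMaxWeightIndep M w G I₁) (hX : X ⊆ G) : optW M w (I₁ ∪ X) = optW M w G := by
  have h1 : optW M w G = setWeight w I₁ :=
    le_antisymm (optW_le fun T hT hTi => hmax.2.2 T hT hTi) (le_optW hmax.1 hmax.2.1)
  refine le_antisymm (optW_mono (Finset.union_subset hmax.1 hX)) ?_
  rw [h1]
  exact le_optW Finset.subset_union_left hmax.2.1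

/-- two-point submodularity of the weighted rank function -/
lemma optW_submod2 {w : E → ℝ} (hw : ∀ e, 0 ≤ w e) (x y : E) (A : Finset E) :
    optW M w (insert x (insert y A)) + optW M w A ≤
      optW M w (insert x A) + optW M w (insert y A) := by
  by_cases hxA : x ∈ A
  · rw [Finset.insert_eq_self.2 (Finset.mem_insert_of_mem hxA), Finset.insert_eq_self.2 hxA]
    linarith
  by_cases hyA : y ∈ A
  · rw [Finset.insert_eq_self.2 hyA]
  by_cases hxy : x = y
  · subst hxy
    rw [Finset.insert_idem]
    have := optW_mono (M := M) (w := w) (Finset.subset_insert x A)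
    linarith
  obtain ⟨T, hTsub, hTind, hTval, hTmax⟩ := exists_optW M w (insert x (insert y A))
  by_cases hxT : x ∈ T
  swap
  · have hT' : T ⊆ insert y A := by
      intro t ht
      rcases Finset.mem_insert.1 (hTsub ht) with rfl | h'
      · exact absurd ht hxT
      · exact h'
    have h1 : optW M w (insert x (insert y A)) ≤ optW M w (insert y A) :=
      hTval ▸ le_optW hT' hTind
    have h2 : optW M w A ≤ optW M w (insert x A) := optW_mono (Finset.subset_insert _ _)
    linarith
  by_cases hyT : y ∈ T
  swap
  · have hT' : T ⊆ insert x A := by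
      intro t ht
      rcases Finset.mem_insert.1 (hTsub ht) with rfl | h'
      · exact Finset.mem_insert_self _ _
      rcases Finset.mem_insert.1 h' with rfl | h''
      · exact absurd ht hyT
      · exact Finset.mem_insert_of_mem h''
    have h1 : optW M w (insert x (insert y A)) ≤ optW M w (insert x A) :=
      hTval ▸ le_optW hT' hTind
    have h2 : optW M w A ≤ optW M w (insert y A) := optW_mono (Finset.subset_insert _ _)
    linarith
  -- x, y ∈ T
  obtain ⟨S₀, hS₀sub, hS₀ind, hS₀val, _⟩ := exists_optW M w A
  obtain ⟨S, hS₀S, hSmax'⟩ := exists_maxIn_extending hS₀ind hS₀sub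
  rw [IsMaxIn_def] at hSmax'
  obtain ⟨hSA, hSind, hSmax⟩ := hSmax'
  have hwS : setWeight w S = optW M w A := by
    refine le_antisymm (le_optW hSA hSind) ?_
    rw [← hS₀val]
    exact sw_mono hw hS₀S
  have hxS : x ∉ S := fun h => hxA (hSA h)
  have hyS : y ∉ S := fun h => hyA (hSA h)
  have hTerase_y : T.erase y ⊆ insert x A := by
    intro t ht
    obtain ⟨hty, htT⟩ := Finset.mem_erase.1 ht
    rcases Finset.mem_insert.1 (hTsub htT) with rfl | h'
    · exact Finset.mem_insert_self _ _
    rcases Finset.mem_insert.1 h' with rfl | h''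
    · exact absurd rfl hty
    · exact Finset.mem_insert_of_mem h''
  have hTerase_x : T.erase x ⊆ insert y A := by
    intro t ht
    obtain ⟨htx, htT⟩ := Finset.mem_erase.1 ht
    rcases Finset.mem_insert.1 (hTsub htT) with rfl | h'
    · exact absurd rfl htx
    · exact h'
  by_cases hyS' : M.Indep (insert y S)
  · have h1 : setWeight w (insert y S) ≤ optW M w (insert y A) :=
      le_optW (Finset.insert_subset_insert _ hSA) hyS'
    rw [sw_insert hyS] at h1
    have h2 : setWeight w (T.erase y) ≤ optW M w (insert x A) :=
      le_optW hTerase_y (M.indep_subset hTind (Finset.erase_subset _ _))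
    rw [sw_erase hyT] at h2
    linarith [hTval, hwS]
  by_cases hxS' : M.Indep (insert x S)
  · have h1 : setWeight w (insert x S) ≤ optW M w (insert x A) :=
      le_optW (Finset.insert_subset_insert _ hSA) hxS'
    rw [sw_insert hxS] at h1
    have h2 : setWeight w (T.erase x) ≤ optW M w (insert y A) :=
      le_optW hTerase_x (M.indep_subset hTind (Finset.erase_subset _ _))
    rw [sw_erase hxT] at h2
    linarith [hTval, hwS]
  -- both insertions dependent: strong exchange
  obtain ⟨C, hCS, hCdep, hmin⟩ := exists_min_dep hSind hxS'
  have hCind : M.Indep C := M.indep_subset hSind hCS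
  obtain ⟨s, hsC, hsT, hsind⟩ := exchange_right hTind hxT hCind hCdep
  have hxSer : M.Indep (insert x (S.erase s)) := exchange_left hSind hxS hCS hCdep hmin hsC
  have hsS : s ∈ S := hCS hsC
  have h1 : setWeight w (insert x (S.erase s)) ≤ optW M w (insert x A) := by
    refine le_optW ?_ hxSer
    exact Finset.insert_subset_insert _ ((Finset.erase_subset _ _).trans hSA)
  rw [sw_insert (fun h => hxS (Finset.erase_subset _ _ h)), sw_erase hsS] at h1
  have h2 : setWeight w (insert s (T.erase x)) ≤ optW M w (insert y A) := by
    refine le_optW ?_ hsind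
    refine Finset.insert_subset (Finset.mem_insert_of_mem (hSA hsS)) hTerase_x
  rw [sw_insert (fun h => hsT (Finset.erase_subset _ _ h)), sw_erase hxT] at h2
  linarith [hTval, hwS]

/-- diminishing marginals for optW -/
lemma optW_marg {w : E → ℝ} (hw : ∀ e, 0 ≤ w e) (e : E) {Z' Z : Finset E} (h : Z' ⊆ Z) :
    optW M w (insert e Z) + optW M w Z' ≤ optW M w Z + optW M w (insert e Z') := by
  have key : ∀ D Z', optW M w (insert e (Z' ∪ D)) + optW M w Z' ≤
      optW M w (Z' ∪ D) + optW M w (insert e Z') := by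
    intro D
    induction D using Finset.induction with
    | empty => intro Z'; rw [Finset.union_empty]; exact le_of_eq (add_comm _ _)
    | @insert a D ha ih =>
      intro Z'
      rw [Finset.union_insert]
      have h2 := optW_submod2 (M := M) hw e a (Z' ∪ D)
      have h3 := ih Z'
      have h4 : optW M w (insert a (Z' ∪ D)) + optW M w (Z' ∪ D) ≤
          optW M w (insert a (Z' ∪ D)) + optW M w (Z' ∪ D) := le_refl _
      have h5 := optW_submod2 (M := M) hw a e (Z' ∪ D)
      -- we need: optW (insert e (insert a W)) + optW Z' ≤ optW (insert a W) + optW (insert e Z')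
      -- h2 : optW (insert e (insert a W)) + optW W ≤ optW (insert e W) + optW (insert a W)
      linarith
  have := key (Z \ Z') Z'
  rwa [Finset.union_sdiff_of_subset h] at this


lemma optW_def (M : FinMatroid E) (w : E → ℝ) :
    optW M w = bestVal {T | M.Indep T} (setWeight w) := rfl


/-- expectation of `g` over a `p`-random subset of `S` -/
def Ex (p : ℝ) (S : Finset E) (g : Finset E → ℝ) : ℝ :=
  ∑ A ∈ S.powerset, p ^ A.card * (1 - p) ^ (S.card - A.card) * g A

lemma ex_empty (p : ℝ) (g : Finset E → ℝ) : Ex p ∅ g = g ∅ := by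
  simp [Ex]

lemma ex_insert {p : ℝ} {S : Finset E} {a : E} (ha : a ∉ S) (g : Finset E → ℝ) :
    Ex p (insert a S) g = p * Ex p S (fun A => g (insert a A)) + (1 - p) * Ex p S g := by
  unfold Ex
  rw [Finset.sum_powerset_insert ha, Finset.mul_sum, Finset.mul_sum, add_comm]
  congr 1
  · apply Finset.sum_congr rfl
    intro A hA
    have hAS : A ⊆ S := mem_powerset.1 hA
    have haA : a ∉ A := fun h => ha (hAS h)
    have hc : A.card ≤ S.card := Finset.card_le_card hAS
    rw [Finset.card_insert_of_notMem ha, Finset.card_insert_of_notMem haA]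
    have h2 : S.card + 1 - (A.card + 1) = S.card - A.card := by omega
    rw [h2, pow_succ]
    ring
  · apply Finset.sum_congr rfl
    intro A hA
    have hAS : A ⊆ S := mem_powerset.1 hA
    have hc : A.card ≤ S.card := Finset.card_le_card hAS
    rw [Finset.card_insert_of_notMem ha]
    have h2 : S.card + 1 - A.card = (S.card - A.card) + 1 := by omega
    rw [h2, pow_succ]
    ring

lemma ex_congr {p : ℝ} {S : Finset E} {g g' : Finset E → ℝ}
    (h : ∀ A ∈ S.powerset, g A = g' A) : Ex p S g = Ex p S g' :=
  Finset.sum_congr rfl fun A hA => by rw [h A hA]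

lemma ex_add (p : ℝ) (S : Finset E) (g h : Finset E → ℝ) :
    Ex p S (fun A => g A + h A) = Ex p S g + Ex p S h := by
  simp [Ex, mul_add, Finset.sum_add_distrib]

lemma ex_smul (p c : ℝ) (S : Finset E) (g : Finset E → ℝ) :
    Ex p S (fun A => c * g A) = c * Ex p S g := by
  unfold Ex
  rw [Finset.mul_sum]
  exact Finset.sum_congr rfl fun A _ => by ring

lemma ex_const (p : ℝ) (S : Finset E) (c : ℝ) : Ex p S (fun _ => c) = c := by
  induction S using Finset.induction with
  | empty => simp [Ex]
  | @insert a S ha ih =>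
    rw [ex_insert ha, ih]
    ring

lemma coeff_nonneg {p : ℝ} (hp0 : 0 ≤ p) (hp1 : p ≤ 1) (n m : ℕ) :
    0 ≤ p ^ n * (1 - p) ^ m :=
  mul_nonneg (pow_nonneg hp0 n) (pow_nonneg (by linarith) m)

lemma ex_nonneg {p : ℝ} (hp0 : 0 ≤ p) (hp1 : p ≤ 1) {S : Finset E} {g : Finset E → ℝ}
    (hg : ∀ A ∈ S.powerset, 0 ≤ g A) : 0 ≤ Ex p S g :=
  Finset.sum_nonneg fun A hA => mul_nonneg (coeff_nonneg hp0 hp1 _ _) (hg A hA)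

lemma ex_mono {p : ℝ} (hp0 : 0 ≤ p) (hp1 : p ≤ 1) {S : Finset E} {g g' : Finset E → ℝ}
    (h : ∀ A ∈ S.powerset, g A ≤ g' A) : Ex p S g ≤ Ex p S g' :=
  Finset.sum_le_sum fun A hA =>
    mul_le_mul_of_nonneg_left (h A hA) (coeff_nonneg hp0 hp1 _ _)

lemma ex_split (p : ℝ) {S T : Finset E} (hST : Disjoint S T) (g : Finset E → ℝ) :
    Ex p (S ∪ T) g = Ex p S (fun A => Ex p T (fun B => g (A ∪ B))) := by
  induction S using Finset.induction generalizing g with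
  | empty =>
    rw [Finset.empty_union, ex_empty]
    exact ex_congr fun B _ => by rw [Finset.empty_union]
  | @insert a S ha ih =>
    have haT : a ∉ T := Finset.disjoint_left.1 hST (Finset.mem_insert_self a S)
    have hST' : Disjoint S T := hST.mono_left (Finset.subset_insert a S)
    have haST : a ∉ S ∪ T := by simp [ha, haT]
    rw [Finset.insert_union, ex_insert haST, ih hST' (fun A => g (insert a A)), ih hST' g,
      ex_insert ha]
    congr 1
    congr 1
    apply ex_congr
    intro A _
    apply ex_congr
    intro B _
    rw [Finset.insert_union]

lemma ex_marg (p : ℝ) {S U : Finset E} (hSU : S ⊆ U) (g : Finset E → ℝ) :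
    Ex p U (fun A => g (A ∩ S)) = Ex p S g := by
  have hU : S ∪ (U \ S) = U := Finset.union_sdiff_of_subset hSU
  rw [← hU, ex_split p Finset.disjoint_sdiff]
  have : ∀ A ∈ S.powerset, Ex p (U \ S) (fun B => g ((A ∪ B) ∩ S)) = g A := by
    intro A hA
    have hAS : A ⊆ S := mem_powerset.1 hA
    have : ∀ B ∈ (U \ S).powerset, g ((A ∪ B) ∩ S) = g A := by
      intro B hB
      have hBS : Disjoint B S := (Finset.sdiff_disjoint).mono_left (mem_powerset.1 hB)
      congr 1
      rw [Finset.union_inter_distrib_right, Finset.inter_eq_left.2 hAS,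
        Finset.disjoint_iff_inter_eq_empty.1 hBS, Finset.union_empty]
    rw [ex_congr this, ex_const]
  rw [ex_congr this]

lemma ex_swap (p : ℝ) (S T : Finset E) (g : Finset E → Finset E → ℝ) :
    Ex p S (fun A => Ex p T (fun B => g A B)) = Ex p T (fun B => Ex p S (fun A => g A B)) := by
  induction S using Finset.induction generalizing g with
  | empty =>
    rw [ex_empty]
    exact ex_congr fun B _ => by rw [ex_empty]
  | @insert a S ha ih =>
    rw [ex_insert ha, ih, ih]
    rw [← ex_smul, ← ex_smul, ← ex_add]
    exact ex_congr fun B _ => (ex_insert ha (fun A => g A B)).symm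

lemma ex_pzero (S : Finset E) (g : Finset E → ℝ) : Ex 0 S g = g ∅ := by
  induction S using Finset.induction with
  | empty => exact ex_empty 0 g
  | @insert a S ha ih => rw [ex_insert ha, ih]; ring

/-- concavity (chord) lower bound for functions with diminishing marginals -/
lemma ex_chord {p : ℝ} (hp0 : 0 ≤ p) (hp1 : p ≤ 1) (F : Finset E → ℝ)
    (hsub : ∀ (e : E) (Z' Z : Finset E), Z' ⊆ Z →
      F (insert e Z) + F Z' ≤ F Z + F (insert e Z')) :
    ∀ (S Z : Finset E), (1 - p) * F Z + p * F (S ∪ Z) ≤ Ex p S (fun A => F (A ∪ Z)) := by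
  intro S
  induction S using Finset.induction with
  | empty => intro Z; rw [ex_empty, Finset.empty_union]; ring_nf; exact le_refl _
  | @insert a S ha ih =>
    intro Z
    rw [ex_insert ha]
    have h1 : (1 - p) * F (insert a Z) + p * F (S ∪ insert a Z) ≤
        Ex p S (fun A => F (A ∪ insert a Z)) := ih (insert a Z)
    have h2 : (1 - p) * F Z + p * F (S ∪ Z) ≤ Ex p S (fun A => F (A ∪ Z)) := ih Z
    have hre : Ex p S (fun A => F (insert a A ∪ Z)) = Ex p S (fun A => F (A ∪ insert a Z)) :=
      ex_congr fun A _ => by rw [Finset.insert_union, Finset.union_insert]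
    have hsm : F (insert a (S ∪ Z)) + F Z ≤ F (S ∪ Z) + F (insert a Z) :=
      hsub a Z (S ∪ Z) Finset.subset_union_right
    have hiu : insert a S ∪ Z = insert a (S ∪ Z) := Finset.insert_union a S Z
    rw [Finset.union_insert] at h1
    rw [hiu, hre]
    nlinarith [mul_le_mul_of_nonneg_left h1 hp0,
      mul_le_mul_of_nonneg_left h2 (by linarith : (0:ℝ) ≤ 1 - p),
      mul_le_mul_of_nonneg_left hsm (mul_nonneg hp0 (by linarith : (0:ℝ) ≤ 1 - p))]


/-- contracted rank, real valued -/
def rk2 (M : FinMatroid E) (K X : Finset E) : ℝ := (mrk M (K ∪ X) : ℝ) - (mrk M K : ℝ)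

lemma rk2_nonneg (K X : Finset E) : 0 ≤ rk2 M K X := by
  have := mrk_mono (M := M) (Finset.subset_union_left (s₁ := K) (s₂ := X))
  unfold rk2
  have : (mrk M K : ℝ) ≤ mrk M (K ∪ X) := by exact_mod_cast this
  linarith

lemma rk2_mono (K : Finset E) {X Y : Finset E} (h : X ⊆ Y) : rk2 M K X ≤ rk2 M K Y := by
  have := mrk_mono (M := M) (Finset.union_subset_union (Subset.refl K) h)
  unfold rk2
  have : (mrk M (K ∪ X) : ℝ) ≤ mrk M (K ∪ Y) := by exact_mod_cast this
  linarith

lemma rk2_split (K A B : Finset E) : rk2 M K (A ∪ B) = rk2 M K A + rk2 M (K ∪ A) B := by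
  unfold rk2
  rw [← Finset.union_assoc]
  ring

lemma rk2_empty (K : Finset E) : rk2 M K ∅ = 0 := by
  unfold rk2
  rw [Finset.union_empty]
  ring

lemma rk2_marg (K : Finset E) (e : E) (Z' Z : Finset E) (h : Z' ⊆ Z) :
    rk2 M K (insert e Z) + rk2 M K Z' ≤ rk2 M K Z + rk2 M K (insert e Z') := by
  have h1 : K ∪ insert e Z = insert e (K ∪ Z) := by
    ext x; simp only [Finset.mem_union, Finset.mem_insert]; tauto
  have h2 : K ∪ insert e Z' = insert e (K ∪ Z') := by
    ext x; simp only [Finset.mem_union, Finset.mem_insert]; tauto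
  have h3 := mrk_insert_submod (M := M) e (Finset.union_subset_union (Subset.refl K) h)
  unfold rk2
  rw [h1, h2]
  have h4 : (mrk M (insert e (K ∪ Z)) : ℝ) + mrk M (K ∪ Z') ≤
      (mrk M (K ∪ Z) : ℝ) + mrk M (insert e (K ∪ Z')) := by exact_mod_cast h3
  linarith

-- prefixUnion lemmas
lemma prefixUnion_zero (I : ℕ → Finset E) : prefixUnion I 0 = ∅ := by
  unfold prefixUnion
  rw [Finset.Icc_eq_empty (by omega)]
  rfl

lemma prefixUnion_succ_shift (I : ℕ → Finset E) (k : ℕ) :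
    prefixUnion I (k + 1) = I 1 ∪ prefixUnion (fun t => I (t + 1)) k := by
  unfold prefixUnion
  ext e
  simp only [Finset.mem_biUnion, Finset.mem_Icc, Finset.mem_union]
  constructor
  · rintro ⟨t, ⟨h1, h2⟩, he⟩
    rcases Nat.eq_or_lt_of_le h1 with h | h
    · exact Or.inl (by rw [← h] at he; exact he)
    · refine Or.inr ⟨t - 1, ⟨by omega, by omega⟩, ?_⟩
      have : t - 1 + 1 = t := by omega
      rwa [this]
  · rintro (he | ⟨t, ⟨h1, h2⟩, he⟩)
    · exact ⟨1, ⟨le_refl _, by omega⟩, he⟩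
    · exact ⟨t + 1, ⟨by omega, by omega⟩, he⟩

lemma prefixUnion_subset {I : ℕ → Finset E} {H : Finset E} (k : ℕ)
    (h : ∀ t ∈ Finset.Icc 1 k, I t ⊆ H) : prefixUnion I k ⊆ H :=
  Finset.biUnion_subset.2 h

/-- The core unweighted (rank) sparsification bound, with contraction by `K`. -/
lemma Ucore {p : ℝ} (hp0 : 0 ≤ p) (hp1 : p ≤ 1) :
    ∀ (τ : ℕ) (K H : Finset E) (J : ℕ → Finset E),
    (∀ t ∈ Finset.Icc 1 τ, J t ⊆ H \ prefixUnion J (t - 1) ∧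
      mrk M (K ∪ J t) = mrk M (K ∪ (H \ prefixUnion J (t - 1)))) →
    (1 - (1 - p) ^ τ) * Ex p univ (fun A => rk2 M K (A ∩ H)) ≤
      Ex p univ (fun A => rk2 M K (A ∩ prefixUnion J τ)) := by
  intro τ
  induction τ with
  | zero =>
    intro K H J _
    rw [pow_zero]
    norm_num
    exact ex_nonneg hp0 hp1 fun A _ => rk2_nonneg _ _
  | succ τ ih =>
    intro K H J hJ
    have h1 := hJ 1 (by simp)
    rw [Nat.sub_self, prefixUnion_zero, Finset.sdiff_empty] at h1
    set J₁ := J 1 with hJ₁def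
    set H' := H \ J₁ with hH'def
    set J' := fun t => J (t + 1) with hJ'def
    set Q' := prefixUnion J' τ with hQ'def
    have hJ₁H : J₁ ⊆ H := h1.1
    -- index bookkeeping
    have hindex : ∀ t ∈ Finset.Icc 1 τ, H' \ prefixUnion J' (t - 1) = H \ prefixUnion J t := by
      intro t ht
      rw [Finset.mem_Icc] at ht
      have ht1 : t - 1 + 1 = t := by omega
      have hp : prefixUnion J t = J 1 ∪ prefixUnion J' (t - 1) := by
        conv_lhs => rw [← ht1]
        exact prefixUnion_succ_shift J (t - 1)
      rw [hp, hH'def]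
      ext e
      simp only [Finset.mem_sdiff, Finset.mem_union]
      tauto
    have hJ't : ∀ t ∈ Finset.Icc 1 τ, J' t ⊆ H' \ prefixUnion J' (t - 1) := by
      intro t ht
      rw [Finset.mem_Icc] at ht
      have ht' : t + 1 ∈ Finset.Icc 1 (τ + 1) := by rw [Finset.mem_Icc]; omega
      have := (hJ (t + 1) ht').1
      rw [hindex t (by rw [Finset.mem_Icc]; omega)]
      simpa using this
    have hQ'H' : Q' ⊆ H' := by
      apply prefixUnion_subset
      intro t ht
      exact (hJ't t ht).trans (Finset.sdiff_subset)
    have hQ'H : Q' ⊆ H := hQ'H'.trans (Finset.sdiff_subset)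
    have hdisj : Disjoint J₁ H' := Finset.disjoint_sdiff
    have hdisjQ : Disjoint J₁ Q' := hdisj.mono_right hQ'H'
    -- spanning conditions for contracted IH
    have hspan : ∀ (A : Finset E), A ⊆ J₁ → ∀ t ∈ Finset.Icc 1 τ,
        J' t ⊆ H' \ prefixUnion J' (t - 1) ∧
        mrk M ((K ∪ A) ∪ J' t) = mrk M ((K ∪ A) ∪ (H' \ prefixUnion J' (t - 1))) := by
      intro A hA t ht
      refine ⟨hJ't t ht, ?_⟩
      rw [Finset.mem_Icc] at ht
      have ht' : t + 1 ∈ Finset.Icc 1 (τ + 1) := by rw [Finset.mem_Icc]; omega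
      have h2 := hJ (t + 1) ht'
      have ht1 : t + 1 - 1 = t := by omega
      rw [ht1] at h2
      have hsub : J (t + 1) ⊆ H \ prefixUnion J t := h2.1
      have hcongr : mrk M ((K ∪ J (t + 1)) ∪ A) =
          mrk M ((K ∪ (H \ prefixUnion J t)) ∪ A) :=
        mrk_union_congr (Finset.union_subset_union (Subset.refl K) hsub) h2.2
      rw [hindex t (by rw [Finset.mem_Icc]; omega)]
      calc mrk M ((K ∪ A) ∪ J' t) = mrk M ((K ∪ J (t + 1)) ∪ A) := by
            rw [Finset.union_right_comm]
      _ = mrk M ((K ∪ (H \ prefixUnion J t)) ∪ A) := hcongr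
      _ = mrk M ((K ∪ A) ∪ (H \ prefixUnion J t)) := by rw [Finset.union_right_comm]
    -- decomposition identities
    have hHsplit : J₁ ∪ H' = H := Finset.union_sdiff_of_subset hJ₁H
    have hD1 : Ex p univ (fun A => rk2 M K (A ∩ H)) =
        Ex p J₁ (fun A => rk2 M K A + Ex p H' (fun B => rk2 M (K ∪ A) B)) := by
      rw [ex_marg p (Finset.subset_univ H), ← hHsplit, ex_split p hdisj]
      apply ex_congr
      intro A hA
      have : ∀ B ∈ H'.powerset, rk2 M K (A ∪ B) = rk2 M K A + rk2 M (K ∪ A) B :=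
        fun B _ => rk2_split K A B
      rw [ex_congr this, ex_add, ex_const]
    have hQsplit : prefixUnion J (τ + 1) = J₁ ∪ Q' := prefixUnion_succ_shift J τ
    have hD2 : Ex p univ (fun A => rk2 M K (A ∩ prefixUnion J (τ + 1))) =
        Ex p J₁ (fun A => rk2 M K A + Ex p Q' (fun B => rk2 M (K ∪ A) B)) := by
      rw [hQsplit, ex_marg p (Finset.subset_univ (J₁ ∪ Q')), ex_split p hdisjQ]
      apply ex_congr
      intro A hA
      have : ∀ B ∈ Q'.powerset, rk2 M K (A ∪ B) = rk2 M K A + rk2 M (K ∪ A) B :=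
        fun B _ => rk2_split K A B
      rw [ex_congr this, ex_add, ex_const]
    -- apply IH for each A ⊆ J₁
    have hIH : ∀ A ∈ J₁.powerset,
        (1 - (1 - p) ^ τ) * Ex p H' (fun B => rk2 M (K ∪ A) B) ≤
          Ex p Q' (fun B => rk2 M (K ∪ A) B) := by
      intro A hA
      have h := ih (K ∪ A) H' J' (hspan A (mem_powerset.1 hA))
      rwa [ex_marg p (Finset.subset_univ H') (fun B => rk2 M (K ∪ A) B),
        ex_marg p (Finset.subset_univ Q') (fun B => rk2 M (K ∪ A) B)] at h
    -- scalar abbreviations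
    set ρ : ℝ := rk2 M K H with hρdef
    have hρ0 : 0 ≤ ρ := rk2_nonneg K H
    -- pointwise bound e A ≤ ρ - rk2 K A
    have hEA : ∀ A ∈ J₁.powerset, Ex p H' (fun B => rk2 M (K ∪ A) B) ≤ ρ - rk2 M K A := by
      intro A hA
      have hAJ : A ⊆ J₁ := mem_powerset.1 hA
      have hup : ∀ B ∈ H'.powerset, rk2 M (K ∪ A) B ≤ ρ - rk2 M K A := by
        intro B hB
        have hBH : B ⊆ H := (mem_powerset.1 hB).trans (Finset.sdiff_subset)
        have h5 : rk2 M (K ∪ A) B ≤ rk2 M (K ∪ A) H := rk2_mono _ hBH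
        have h6 : (K ∪ A) ∪ H = K ∪ H := by
          rw [Finset.union_assoc, Finset.union_eq_right.2 (hAJ.trans hJ₁H)]
        have h7 : rk2 M (K ∪ A) H = ρ - rk2 M K A := by
          rw [hρdef]
          unfold rk2
          rw [h6]
          ring
        linarith
      calc Ex p H' (fun B => rk2 M (K ∪ A) B) ≤ Ex p H' (fun _ => ρ - rk2 M K A) :=
            ex_mono hp0 hp1 hup
      _ = ρ - rk2 M K A := ex_const _ _ _
    -- chord bound: m ≥ p ρ
    have hm : p * ρ ≤ Ex p J₁ (fun A => rk2 M K A) := by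
      have h := ex_chord hp0 hp1 (rk2 M K) (rk2_marg K) J₁ ∅
      rw [Finset.union_empty, rk2_empty] at h
      have h2 : Ex p J₁ (fun A => rk2 M K (A ∪ ∅)) = Ex p J₁ (fun A => rk2 M K A) :=
        ex_congr fun A _ => by rw [Finset.union_empty]
      rw [h2] at h
      have h3 : rk2 M K J₁ = ρ := by
        rw [hρdef]
        unfold rk2
        rw [h1.2]
      rw [h3] at h
      linarith
    -- assemble
    set m : ℝ := Ex p J₁ (fun A => rk2 M K A) with hmdef
    set s : ℝ := Ex p J₁ (fun A => Ex p H' (fun B => rk2 M (K ∪ A) B)) with hsdef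
    have hs0 : 0 ≤ s :=
      ex_nonneg hp0 hp1 fun A _ => ex_nonneg hp0 hp1 fun B _ => rk2_nonneg _ _
    have hsle : s ≤ ρ - m := by
      have := ex_mono hp0 hp1 hEA
      rw [hsdef, hmdef]
      have h2 : Ex p J₁ (fun A => ρ - rk2 M K A) = ρ - Ex p J₁ (fun A => rk2 M K A) := by
        have h3 : ∀ A ∈ J₁.powerset, ρ - rk2 M K A = ρ + (-1) * rk2 M K A := fun A _ => by ring
        rw [ex_congr h3, ex_add, ex_const, ex_smul]
        ring
      linarith [this, h2.le, h2.ge]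
    have hLHS : Ex p univ (fun A => rk2 M K (A ∩ H)) = m + s := by
      rw [hD1, ex_add]
    have hRHS : m + (1 - (1 - p) ^ τ) * s ≤
        Ex p univ (fun A => rk2 M K (A ∩ prefixUnion J (τ + 1))) := by
      rw [hD2]
      have hpt : ∀ A ∈ J₁.powerset,
          rk2 M K A + (1 - (1 - p) ^ τ) * Ex p H' (fun B => rk2 M (K ∪ A) B) ≤
          rk2 M K A + Ex p Q' (fun B => rk2 M (K ∪ A) B) := by
        intro A hA
        linarith [hIH A hA]
      calc m + (1 - (1 - p) ^ τ) * s
          = Ex p J₁ (fun A => rk2 M K A +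
              (1 - (1 - p) ^ τ) * Ex p H' (fun B => rk2 M (K ∪ A) B)) := by
            rw [ex_add, ex_smul]
      _ ≤ _ := ex_mono hp0 hp1 hpt
    rw [hLHS]
    refine le_trans ?_ hRHS
    -- final arithmetic
    have hu0 : (0:ℝ) ≤ (1 - p) ^ τ := pow_nonneg (by linarith) τ
    have hps : p * s ≤ p * (ρ - m) := mul_le_mul_of_nonneg_left hsle hp0
    have hpm : (1 - p) ^ τ * (p * ρ) ≤ (1 - p) ^ τ * m := mul_le_mul_of_nonneg_left hm hu0
    rw [pow_succ]
    nlinarith [mul_le_mul_of_nonneg_left hps hu0]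


/-- weight decomposition at the top level set -/
lemma sw_decomp {w : E → ℝ} {c c₂ : ℝ} (hc₂c : c₂ ≤ c)
    (hval : ∀ e : E, w e = c ∨ w e ≤ c₂) (T : Finset E) :
    setWeight w T = setWeight (fun e => min (w e) c₂) T +
      (c - c₂) * ((T ∩ univ.filter (fun e => c ≤ w e)).card : ℝ) := by
  classical
  set U := univ.filter (fun e => c ≤ w e) with hU
  have hpt : ∀ e : E, w e = min (w e) c₂ + (c - c₂) * (if e ∈ U then 1 else 0) := by
    intro e
    by_cases he : e ∈ U
    · have hce : c ≤ w e := (Finset.mem_filter.1 he).2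
      have hwe : w e = c := by
        rcases hval e with h | h
        · exact h
        · linarith
      rw [hwe, min_eq_right hc₂c, if_pos he]
      ring
    · have hce : ¬ c ≤ w e := fun h => he (Finset.mem_filter.2 ⟨Finset.mem_univ e, h⟩)
      have hwe : w e ≤ c₂ := by
        rcases hval e with h | h
        · exact absurd (le_of_eq h.symm) hce
        · exact h
      rw [min_eq_left (by linarith), if_neg he]
      ring
  unfold setWeight
  calc ∑ e ∈ T, w e = ∑ e ∈ T, (min (w e) c₂ + (c - c₂) * (if e ∈ U then 1 else 0)) :=
        Finset.sum_congr rfl fun e _ => hpt e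
  _ = (∑ e ∈ T, min (w e) c₂) + (c - c₂) * ∑ e ∈ T, (if e ∈ U then (1:ℝ) else 0) := by
        rw [Finset.sum_add_distrib, Finset.mul_sum]
  _ = (∑ e ∈ T, min (w e) c₂) + (c - c₂) * ((T ∩ U).card : ℝ) := by
        congr 1
        rw [Finset.sum_ite_mem]
        simp

/-- KEY A: decomposition of the weighted optimum at the top level -/
lemma optW_decomp {w : E → ℝ} (hw : ∀ e, 0 ≤ w e) {c c₂ : ℝ} (hc₂0 : 0 ≤ c₂) (hc₂c : c₂ < c)
    (hval : ∀ e : E, w e = c ∨ w e ≤ c₂) (S : Finset E) :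
    optW M w S = optW M (fun e => min (w e) c₂) S +
      (c - c₂) * (mrk M (S ∩ univ.filter (fun e => c ≤ w e)) : ℝ) := by
  classical
  set U := univ.filter (fun e => c ≤ w e) with hU
  set w' := fun e => min (w e) c₂ with hw'
  have hδ : (0:ℝ) ≤ c - c₂ := by linarith
  refine le_antisymm ?_ ?_
  · -- ≤ : decompose an optimum
    apply optW_le
    intro T hTS hTi
    rw [sw_decomp hc₂c.le hval T]
    have h1 : setWeight w' T ≤ optW M w' S := le_optW hTS hTi
    have h2 : (T ∩ U).card ≤ mrk M (S ∩ U) :=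
      card_le_mrk (M.indep_subset hTi Finset.inter_subset_left)
        (Finset.inter_subset_inter hTS (Subset.refl U))
    have h3 : ((T ∩ U).card : ℝ) ≤ (mrk M (S ∩ U) : ℝ) := by exact_mod_cast h2
    nlinarith
  · -- ≥ : construct an optimum with many top-level elements
    -- choose a w'-opt T maximizing |T ∩ U|
    set Ω := (S.powerset.filter M.Indep).filter (fun T => setWeight w' T = optW M w' S) with hΩ
    have hne : Ω.Nonempty := by
      obtain ⟨T₀, h1, h2, h3, _⟩ := exists_optW M w' S
      exact ⟨T₀, mem_filter.2 ⟨mem_filter.2 ⟨mem_powerset.2 h1, h2⟩, h3⟩⟩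
    obtain ⟨T, hTΩ, hTmax⟩ := Finset.exists_max_image Ω (fun T => (T ∩ U).card) hne
    have hTS : T ⊆ S := mem_powerset.1 (mem_filter.1 (mem_filter.1 hTΩ).1).1
    have hTi : M.Indep T := (mem_filter.1 (mem_filter.1 hTΩ).1).2
    have hTval : setWeight w' T = optW M w' S := (mem_filter.1 hTΩ).2
    -- claim: (T ∩ U).card = mrk M (S ∩ U)
    have hcard : (T ∩ U).card = mrk M (S ∩ U) := by
      refine le_antisymm (card_le_mrk (M.indep_subset hTi Finset.inter_subset_left)
        (Finset.inter_subset_inter hTS (Subset.refl U))) ?_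
      by_contra hlt
      push_neg at hlt
      obtain ⟨B, hBS, hBi, hBc⟩ := exists_mrk_set (M := M) (S ∩ U)
      have hTU : M.Indep (T ∩ U) := M.indep_subset hTi Finset.inter_subset_left
      obtain ⟨e, heB, heTU, hei⟩ := M.indep_exchange hTU hBi (by omega)
      have heSU : e ∈ S ∩ U := hBS heB
      have heU : e ∈ U := (Finset.mem_inter.1 heSU).2
      have heS : e ∈ S := (Finset.mem_inter.1 heSU).1
      have heT : e ∉ T := fun h => heTU (Finset.mem_inter.2 ⟨h, heU⟩)
      -- extend insert e (T ∩ U) to a maximal independent subset of insert e T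
      have hD : insert e (T ∩ U) ⊆ insert e T :=
        Finset.insert_subset_insert _ Finset.inter_subset_left
      obtain ⟨T₁, hDT₁, hT₁max'⟩ := exists_maxIn_extending hei hD
      have hT₁c : T₁.card = mrk M (insert e T) := hT₁max'.card_eq
      rw [IsMaxIn_def] at hT₁max'
      obtain ⟨hT₁sub, hT₁i, hT₁m⟩ := hT₁max'
      have hrkT : T.card ≤ mrk M (insert e T) :=
        card_le_mrk hTi (Finset.subset_insert _ _)
      have hcins : (insert e T).card = T.card + 1 := Finset.card_insert_of_notMem heT
      have hT₁le : T₁.card ≤ T.card + 1 := hcins ▸ Finset.card_le_card hT₁sub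
      have hw'e : w' e = c₂ := by
        have hce : c ≤ w e := (Finset.mem_filter.1 heU).2
        have hwe : w e = c := by
          rcases hval e with h | h
          · exact h
          · linarith
        rw [hw']
        simp only
        rw [hwe, min_eq_right hc₂c.le]
      have hT₁opt : setWeight w' T₁ = optW M w' S ∧ (T ∩ U).card < (T₁ ∩ U).card := by
        have hT₁S : T₁ ⊆ S := hT₁sub.trans (Finset.insert_subset heS hTS)
        have hT₁inU : insert e (T ∩ U) ⊆ T₁ ∩ U := by
          intro x hx
          rcases Finset.mem_insert.1 hx with rfl | hx'
          · exact Finset.mem_inter.2 ⟨hDT₁ (Finset.mem_insert_self _ _), heU⟩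
          · exact Finset.mem_inter.2 ⟨hDT₁ (Finset.mem_insert_of_mem hx'),
              (Finset.mem_inter.1 hx').2⟩
        have hcardU : (T ∩ U).card < (T₁ ∩ U).card := by
          have h5 : (insert e (T ∩ U)).card ≤ (T₁ ∩ U).card := Finset.card_le_card hT₁inU
          rw [Finset.card_insert_of_notMem heTU] at h5
          omega
        rcases Nat.lt_or_ge T₁.card (T.card + 1) with hc1 | hc1
        · -- T₁.card = T.card : exchange one element out
          have hT₁eq : T₁.card = T.card := by omega
          have hsd : ((insert e T) \ T₁).card = 1 := by
            rw [Finset.card_sdiff_of_subset hT₁sub, hcins, hT₁eq]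
            omega
          obtain ⟨f, hf⟩ := Finset.card_eq_one.1 hsd
          have hfmem : f ∈ (insert e T) \ T₁ := hf ▸ Finset.mem_singleton_self f
          have hfT : f ∈ insert e T := (Finset.mem_sdiff.1 hfmem).1
          have hfT₁ : f ∉ T₁ := (Finset.mem_sdiff.1 hfmem).2
          have hfe : f ≠ e := by
            intro h
            exact hfT₁ (h ▸ hDT₁ (Finset.mem_insert_self _ _))
          have hfT' : f ∈ T := by
            rcases Finset.mem_insert.1 hfT with h | h
            · exact absurd h hfe
            · exact h
          have hT₁eq2 : T₁ = insert e (T.erase f) := by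
            have hsub2 : T₁ ⊆ (insert e T).erase f := by
              intro x hx
              exact Finset.mem_erase.2 ⟨fun h => hfT₁ (h ▸ hx), hT₁sub hx⟩
            have : (insert e T).erase f = insert e (T.erase f) :=
              Finset.erase_insert_of_ne hfe.symm
            rw [this] at hsub2
            refine Finset.eq_of_subset_of_card_le hsub2 ?_
            rw [Finset.card_insert_of_notMem (fun h => heT (Finset.erase_subset _ _ h)),
              Finset.card_erase_of_mem hfT', hT₁eq]
            have : 1 ≤ T.card := Finset.card_pos.2 ⟨f, hfT'⟩
            omega
          have hfU : f ∉ U := by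
            intro hfU
            exact hfT₁ (hDT₁ (Finset.mem_insert_of_mem (Finset.mem_inter.2 ⟨hfT', hfU⟩)))
          have hw'f : w' f ≤ c₂ := min_le_right _ _
          have hval₁ : setWeight w' T₁ = w' e + (setWeight w' T - w' f) := by
            rw [hT₁eq2, sw_insert (fun h => heT (Finset.erase_subset _ _ h)), sw_erase hfT']
          have hge : setWeight w' T ≤ setWeight w' T₁ := by
            rw [hval₁, hw'e]
            linarith
          have hle : setWeight w' T₁ ≤ optW M w' S := le_optW hT₁S hT₁i
          exact ⟨le_antisymm hle (hTval ▸ hge), hcardU⟩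
        · -- T₁ = insert e T
          have hT₁eq : T₁ = insert e T :=
            Finset.eq_of_subset_of_card_le hT₁sub (by omega)
          have hval₁ : setWeight w' T₁ = w' e + setWeight w' T := by
            rw [hT₁eq, sw_insert heT]
          have hge : setWeight w' T ≤ setWeight w' T₁ := by
            rw [hval₁, hw'e]
            linarith
          have hle : setWeight w' T₁ ≤ optW M w' S := le_optW hT₁S hT₁i
          exact ⟨le_antisymm hle (hTval ▸ hge), hcardU⟩
      -- contradiction with maximality of T
      have hT₁Ω : T₁ ∈ Ω := by
        refine mem_filter.2 ⟨mem_filter.2 ⟨mem_powerset.2 ?_, hT₁i⟩, hT₁opt.1⟩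
        exact hT₁sub.trans (Finset.insert_subset heS hTS)
      have := hTmax T₁ hT₁Ω
      omega
    -- conclude
    have hfin : setWeight w T ≤ optW M w S := le_optW hTS hTi
    rw [sw_decomp hc₂c.le hval T] at hfin
    rw [← hTval, ← hcard]
    exact hfin

/-- KEY B: a max-weight independent set spans every weight level -/
lemma maxweight_spans {w : E → ℝ} {G It : Finset E}
    (hmax : IsMaxWeightIndep M w G It) {θ : ℝ} (hθ : 0 < θ) :
    mrk M (It ∩ univ.filter (fun e => θ ≤ w e)) =
      mrk M (G ∩ univ.filter (fun e => θ ≤ w e)) := by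
  classical
  set U := univ.filter (fun e => θ ≤ w e) with hU
  obtain ⟨hItG, hIti, hItmax⟩ := hmax
  refine le_antisymm (mrk_mono (Finset.inter_subset_inter hItG (Subset.refl U))) ?_
  by_contra hlt
  push_neg at hlt
  have hItU : M.Indep (It ∩ U) := M.indep_subset hIti Finset.inter_subset_left
  have hItUc : mrk M (It ∩ U) = (It ∩ U).card := mrk_of_indep hItU
  obtain ⟨B, hBS, hBi, hBc⟩ := exists_mrk_set (M := M) (G ∩ U)
  obtain ⟨e, heB, heTU, hei⟩ := M.indep_exchange hItU hBi (by omega)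
  have heGU : e ∈ G ∩ U := hBS heB
  have heU : e ∈ U := (Finset.mem_inter.1 heGU).2
  have heG : e ∈ G := (Finset.mem_inter.1 heGU).1
  have heIt : e ∉ It := fun h => heTU (Finset.mem_inter.2 ⟨h, heU⟩)
  have hwe : θ ≤ w e := (Finset.mem_filter.1 heU).2
  have hD : insert e (It ∩ U) ⊆ insert e It :=
    Finset.insert_subset_insert _ Finset.inter_subset_left
  obtain ⟨T₁, hDT₁, hT₁max'⟩ := exists_maxIn_extending hei hD
  have hT₁c : T₁.card = mrk M (insert e It) := hT₁max'.card_eq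
  rw [IsMaxIn_def] at hT₁max'
  obtain ⟨hT₁sub, hT₁i, hT₁m⟩ := hT₁max'
  have hrkT : It.card ≤ mrk M (insert e It) := card_le_mrk hIti (Finset.subset_insert _ _)
  have hcins : (insert e It).card = It.card + 1 := Finset.card_insert_of_notMem heIt
  have hT₁le : T₁.card ≤ It.card + 1 := hcins ▸ Finset.card_le_card hT₁sub
  rcases Nat.lt_or_ge T₁.card (It.card + 1) with hc1 | hc1
  · -- exchange: T₁ = insert e (It.erase f) with w f < θ
    have hT₁eq : T₁.card = It.card := by omega
    have hsd : ((insert e It) \ T₁).card = 1 := by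
      rw [Finset.card_sdiff_of_subset hT₁sub, hcins, hT₁eq]; omega
    obtain ⟨f, hf⟩ := Finset.card_eq_one.1 hsd
    have hfmem : f ∈ (insert e It) \ T₁ := hf ▸ Finset.mem_singleton_self f
    have hfT : f ∈ insert e It := (Finset.mem_sdiff.1 hfmem).1
    have hfT₁ : f ∉ T₁ := (Finset.mem_sdiff.1 hfmem).2
    have hfe : f ≠ e := fun h => hfT₁ (h ▸ hDT₁ (Finset.mem_insert_self _ _))
    have hfT' : f ∈ It := by
      rcases Finset.mem_insert.1 hfT with h | h
      · exact absurd h hfe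
      · exact h
    have hT₁eq2 : T₁ = insert e (It.erase f) := by
      have hsub2 : T₁ ⊆ (insert e It).erase f := by
        intro x hx
        exact Finset.mem_erase.2 ⟨fun h => hfT₁ (h ▸ hx), hT₁sub hx⟩
      have heq : (insert e It).erase f = insert e (It.erase f) :=
        Finset.erase_insert_of_ne hfe.symm
      rw [heq] at hsub2
      refine Finset.eq_of_subset_of_card_le hsub2 ?_
      rw [Finset.card_insert_of_notMem (fun h => heIt (Finset.erase_subset _ _ h)),
        Finset.card_erase_of_mem hfT', hT₁eq]
      have : 1 ≤ It.card := Finset.card_pos.2 ⟨f, hfT'⟩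
      omega
    have hfU : f ∉ U := fun hfU =>
      hfT₁ (hDT₁ (Finset.mem_insert_of_mem (Finset.mem_inter.2 ⟨hfT', hfU⟩)))
    have hwf : w f < θ := by
      by_contra hcon
      push_neg at hcon
      exact hfU (Finset.mem_filter.2 ⟨Finset.mem_univ f, hcon⟩)
    have hT₁G : T₁ ⊆ G := by
      rw [hT₁eq2]
      exact Finset.insert_subset heG ((Finset.erase_subset _ _).trans hItG)
    have hval₁ : setWeight w T₁ = w e + (setWeight w It - w f) := by
      rw [hT₁eq2, sw_insert (fun h => heIt (Finset.erase_subset _ _ h)), sw_erase hfT']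
    have := hItmax T₁ hT₁G hT₁i
    rw [hval₁] at this
    linarith
  · have hT₁eq : T₁ = insert e It := Finset.eq_of_subset_of_card_le hT₁sub (by omega)
    have hT₁G : T₁ ⊆ G := hT₁eq ▸ Finset.insert_subset heG hItG
    have hval₁ : setWeight w T₁ = w e + setWeight w It := by rw [hT₁eq, sw_insert heIt]
    have := hItmax T₁ hT₁G hT₁i
    rw [hval₁] at this
    linarith


lemma rk2_emptyK (X : Finset E) : rk2 M ∅ X = (mrk M X : ℝ) := by
  unfold rk2
  rw [Finset.empty_union, mrk_empty]
  simp

/-- MAIN weighted induction on the number of distinct positive weight values. -/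
lemma MAIN (p : ℝ) (hp0 : 0 ≤ p) (hp1 : p ≤ 1) (τ : ℕ) (I : ℕ → Finset E) :
    ∀ (k : ℕ) (w : E → ℝ), (∀ e, 0 ≤ w e) →
    ((univ.image w).filter (fun v => 0 < v)).card ≤ k →
    (∀ t ∈ Finset.Icc 1 τ, IsMaxWeightIndep M w ((prefixUnion I (t - 1))ᶜ) (I t)) →
    (1 - (1 - p) ^ τ) * Ex p univ (fun A => optW M w A) ≤
      Ex p univ (fun A => optW M w (prefixUnion I τ ∩ A)) := by
  intro k
  induction k with
  | zero =>
    intro w hw hcard hI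
    -- all weights are zero
    have hz : ∀ e, w e = 0 := by
      intro e
      by_contra hne
      have hpos : 0 < w e := lt_of_le_of_ne (hw e) (Ne.symm hne)
      have : w e ∈ (univ.image w).filter (fun v => 0 < v) :=
        mem_filter.2 ⟨Finset.mem_image.2 ⟨e, Finset.mem_univ e, rfl⟩, hpos⟩
      have := Finset.card_pos.2 ⟨w e, this⟩
      omega
    have hopt : ∀ S : Finset E, optW M w S = 0 := by
      intro S
      refine le_antisymm (optW_le fun T _ _ => le_of_eq ?_) (optW_nonneg M w S)
      unfold setWeight
      simp [hz]
    have h1 : Ex p univ (fun A => optW M w A) = 0 := by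
      rw [ex_congr (fun A _ => hopt A), ex_const]
    have h2 : Ex p univ (fun A => optW M w (prefixUnion I τ ∩ A)) = 0 := by
      rw [ex_congr (fun A _ => hopt _), ex_const]
    rw [h1, h2]
    simp
  | succ k ih =>
    intro w hw hcard hI
    set vals := (univ.image w).filter (fun v => 0 < v) with hvals
    by_cases hne : vals.Nonempty
    swap
    · -- empty: all weights zero again
      have hz : ∀ e, w e = 0 := by
        intro e
        by_contra hne'
        have hpos : 0 < w e := lt_of_le_of_ne (hw e) (Ne.symm hne')
        exact hne ⟨w e, mem_filter.2 ⟨Finset.mem_image.2 ⟨e, Finset.mem_univ e, rfl⟩, hpos⟩⟩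
      have hopt : ∀ S : Finset E, optW M w S = 0 := by
        intro S
        refine le_antisymm (optW_le fun T _ _ => le_of_eq ?_) (optW_nonneg M w S)
        unfold setWeight
        simp [hz]
      have h1 : Ex p univ (fun A => optW M w A) = 0 := by
        rw [ex_congr (fun A _ => hopt A), ex_const]
      have h2 : Ex p univ (fun A => optW M w (prefixUnion I τ ∩ A)) = 0 := by
        rw [ex_congr (fun A (_ : A ∈ _) => hopt (prefixUnion I τ ∩ A)), ex_const]
      rw [h1, h2]
      simp
    -- c := largest positive value
    set c := vals.max' hne with hc
    have hcmem : c ∈ vals := vals.max'_mem hne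
    have hcpos : 0 < c := (mem_filter.1 hcmem).2
    set vals' := vals.erase c with hvals'
    obtain ⟨c₂, hc₂0, hc₂c, hub, hc₂mem⟩ :
        ∃ c₂, 0 ≤ c₂ ∧ c₂ < c ∧ (∀ v ∈ vals', v ≤ c₂) ∧ (0 < c₂ → c₂ ∈ vals') := by
      by_cases hne' : vals'.Nonempty
      · refine ⟨vals'.max' hne', ?_, ?_, fun v hv => Finset.le_max' _ _ hv, fun _ => vals'.max'_mem hne'⟩
        · have hm := vals'.max'_mem hne'
          have : vals'.max' hne' ∈ vals := Finset.erase_subset _ _ hm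
          exact (le_of_lt (mem_filter.1 this).2)
        · have hm := vals'.max'_mem hne'
          have h1 : vals'.max' hne' ≠ c := (Finset.mem_erase.1 hm).1
          have h2 : vals'.max' hne' ≤ c := Finset.le_max' _ _ (Finset.erase_subset _ _ hm)
          exact lt_of_le_of_ne h2 h1
      · refine ⟨0, le_refl _, hcpos, fun v hv => absurd ⟨v, hv⟩ hne', fun h => absurd rfl (ne_of_gt h)⟩
    have hval : ∀ e : E, w e = c ∨ w e ≤ c₂ := by
      intro e
      by_cases hpos : 0 < w e
      · have hmem : w e ∈ vals :=
          mem_filter.2 ⟨Finset.mem_image.2 ⟨e, Finset.mem_univ e, rfl⟩, hpos⟩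
        by_cases hec : w e = c
        · exact Or.inl hec
        · exact Or.inr (hub _ (Finset.mem_erase.2 ⟨hec, hmem⟩))
      · exact Or.inr (le_trans (le_of_not_gt hpos) hc₂0)
    set w' := fun e => min (w e) c₂ with hw'def
    have hw' : ∀ e, 0 ≤ w' e := fun e => le_min (hw e) hc₂0
    set δ := c - c₂ with hδdef
    have hδ0 : (0:ℝ) ≤ δ := by rw [hδdef]; linarith
    set U := univ.filter (fun e => c ≤ w e) with hU
    -- cardinality decrease
    have hcard' : ((univ.image w').filter (fun v => 0 < v)).card ≤ k := by
      have hsub : (univ.image w').filter (fun v => 0 < v) ⊆ vals' := by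
        intro v hv
        obtain ⟨hvim, hvpos⟩ := mem_filter.1 hv
        obtain ⟨e, _, hve⟩ := Finset.mem_image.1 hvim
        rcases hval e with h | h
        · have : w' e = c₂ := by rw [hw'def]; simp only; rw [h, min_eq_right hc₂c.le]
          rw [← hve, this] at hvpos ⊢
          exact hc₂mem hvpos
        · have : w' e = w e := by rw [hw'def]; simp only; rw [min_eq_left h]
          rw [← hve, this] at hvpos ⊢
          have hmem : w e ∈ vals :=
            mem_filter.2 ⟨Finset.mem_image.2 ⟨e, Finset.mem_univ e, rfl⟩, hvpos⟩
          refine Finset.mem_erase.2 ⟨?_, hmem⟩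
          intro heq
          rw [heq] at h
          linarith
      have h1 : vals'.card = vals.card - 1 := Finset.card_erase_of_mem hcmem
      have h2 : 1 ≤ vals.card := Finset.card_pos.2 hne
      have := Finset.card_le_card hsub
      omega
    -- the I t are w'-max-weight independent
    have hI' : ∀ t ∈ Finset.Icc 1 τ, IsMaxWeightIndep M w' ((prefixUnion I (t - 1))ᶜ) (I t) := by
      intro t ht
      obtain ⟨hsub, hind, hmx⟩ := hI t ht
      refine ⟨hsub, hind, ?_⟩
      intro Jt hJt hJti
      have h1 : setWeight w' Jt ≤ optW M w' ((prefixUnion I (t - 1))ᶜ) := le_optW hJt hJti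
      have h2 : optW M w ((prefixUnion I (t - 1))ᶜ) = setWeight w (I t) :=
        le_antisymm (optW_le hmx) (le_optW hsub hind)
      have h3 := optW_decomp (M := M) hw hc₂0 hc₂c hval ((prefixUnion I (t - 1))ᶜ)
      have h4 : mrk M (((prefixUnion I (t - 1))ᶜ) ∩ univ.filter (fun e => c ≤ w e)) =
          (I t ∩ univ.filter (fun e => c ≤ w e)).card := by
        rw [← maxweight_spans (M := M) ⟨hsub, hind, hmx⟩ hcpos]
        exact mrk_of_indep (M.indep_subset hind Finset.inter_subset_left)
      have h5 := sw_decomp (w := w) hc₂c.le hval (I t)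
      rw [h2, h4, h5] at h3
      have h6 : optW M w' ((prefixUnion I (t - 1))ᶜ) = setWeight w' (I t) := by
        rw [hw'def]
        linarith
      rw [h6] at h1
      exact h1
    -- Ucore conditions for the layers intersected with U
    set JU := fun t => I t ∩ U with hJU
    have hprefJU : ∀ j, prefixUnion JU j = prefixUnion I j ∩ U := by
      intro j
      unfold prefixUnion
      ext e
      simp only [Finset.mem_biUnion, Finset.mem_inter, hJU]
      constructor
      · rintro ⟨t, ht, he, heU⟩
        exact ⟨⟨t, ht, he⟩, heU⟩
      · rintro ⟨⟨t, ht, he⟩, heU⟩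
        exact ⟨t, ht, he, heU⟩
    have hUcore : (1 - (1 - p) ^ τ) * Ex p univ (fun A => rk2 M ∅ (A ∩ U)) ≤
        Ex p univ (fun A => rk2 M ∅ (A ∩ prefixUnion JU τ)) := by
      apply Ucore hp0 hp1 τ ∅ U JU
      intro t ht
      obtain ⟨hsub, hind, hmx⟩ := hI t ht
      have hsetid : U \ prefixUnion JU (t - 1) = ((prefixUnion I (t - 1))ᶜ) ∩ U := by
        rw [hprefJU]
        ext e
        simp only [Finset.mem_sdiff, Finset.mem_inter, Finset.mem_compl]
        tauto
      constructor
      · intro e he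
        obtain ⟨heI, heU⟩ := Finset.mem_inter.1 he
        rw [hsetid]
        exact Finset.mem_inter.2 ⟨hsub heI, heU⟩
      · rw [Finset.empty_union, Finset.empty_union, hsetid]
        exact maxweight_spans (M := M) ⟨hsub, hind, hmx⟩ hcpos
    -- IH for w'
    have hIH := ih w' hw' hcard' hI'
    -- assembly
    set Q := prefixUnion I τ with hQ
    have hd1 : ∀ A : Finset E, optW M w (Q ∩ A) =
        optW M w' (Q ∩ A) + δ * (mrk M ((Q ∩ A) ∩ U) : ℝ) :=
      fun A => optW_decomp (M := M) hw hc₂0 hc₂c hval (Q ∩ A)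
    have hd2 : ∀ A : Finset E, optW M w A = optW M w' A + δ * (mrk M (A ∩ U) : ℝ) :=
      fun A => optW_decomp (M := M) hw hc₂0 hc₂c hval A
    have hinter : ∀ A : Finset E, (Q ∩ A) ∩ U = A ∩ (Q ∩ U) := by
      intro A
      ext e
      simp only [Finset.mem_inter]
      tauto
    have hRHS : Ex p univ (fun A => optW M w (Q ∩ A)) =
        Ex p univ (fun A => optW M w' (Q ∩ A)) +
          δ * Ex p univ (fun A => rk2 M ∅ (A ∩ prefixUnion JU τ)) := by
      rw [ex_congr (fun A (_ : A ∈ _) => hd1 A), ex_add]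
      congr 1
      rw [← ex_smul]
      apply ex_congr
      intro A _
      rw [rk2_emptyK, hprefJU, ← hinter A]
    have hLHS : Ex p univ (fun A => optW M w A) =
        Ex p univ (fun A => optW M w' A) + δ * Ex p univ (fun A => rk2 M ∅ (A ∩ U)) := by
      rw [ex_congr (fun A (_ : A ∈ _) => hd2 A), ex_add]
      congr 1
      rw [← ex_smul]
      apply ex_congr
      intro A _
      rw [rk2_emptyK]
    rw [hLHS, hRHS]
    have h7 := mul_le_mul_of_nonneg_left hUcore hδ0
    nlinarith [hIH, h7]


lemma expec_eq_Ex (p : ℝ) (g : Finset E → ℝ) : expec (fun _ => p) g = Ex p univ g := by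
  unfold expec Ex prodWeight
  rw [Finset.powerset_univ]
  apply Finset.sum_congr rfl
  intro A _
  rw [Finset.prod_const, Finset.prod_const, Finset.card_compl, Finset.card_univ]


end Dev

open Dev in
/-- The greedy sparsifier for additive optimization over a matroid:
if `I_t` is a maximum-weight independent set of `M ∖ (I_1 ∪ ⋯ ∪ I_{t-1})` for each
`t = 1, …, τ` and `Q = I_1 ∪ ⋯ ∪ I_τ`, then `|Q| ≤ τ · Rank(M)` and the expected
sparsified optimum is at least `(1 − (1−p)^τ)` times the stochastic optimum; in
particular, for `τ ≥ (1/p)·log(1/ε)` the factor is at least `1 − ε`. -/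
theorem stmt_4 (M : FinMatroid E) (w : E → ℝ) (hw : ∀ e, 0 ≤ w e)
    (p : ℝ) (hp0 : 0 ≤ p) (hp1 : p ≤ 1)
    (τ : ℕ) (hτ : 0 < τ)
    (I : ℕ → Finset E)
    (hI : ∀ t ∈ Finset.Icc 1 τ, IsMaxWeightIndep M w ((prefixUnion I (t - 1))ᶜ) (I t))
    (Q : Finset E) (hQ : Q = prefixUnion I τ) :
    Q.card ≤ τ * M.rank Finset.univ ∧
    ((1 - (1 - p) ^ τ) *
        expec (fun _ => p) (fun A => bestVal {T | M.Indep T} (setWeight w) A)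
      ≤ expec (fun _ => p) (fun A => bestVal {T | M.Indep T} (setWeight w) (Q ∩ A))) ∧
    (∀ ε : ℝ, 0 < ε → ε < 1 → (1 / p) * Real.log (1 / ε) ≤ (τ : ℝ) →
      (1 - ε) * expec (fun _ => p) (fun A => bestVal {T | M.Indep T} (setWeight w) A)
        ≤ expec (fun _ => p) (fun A => bestVal {T | M.Indep T} (setWeight w) (Q ∩ A))) := by
  classical
  -- Part 1 : cardinality
  have hcard : Q.card ≤ τ * M.rank Finset.univ := by
    rw [hQ]
    unfold prefixUnion
    refine le_trans Finset.card_biUnion_le ?_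
    have hbound : ∀ t ∈ Finset.Icc 1 τ, (I t).card ≤ M.rank Finset.univ := by
      intro t ht
      have hind : M.Indep (I t) := (hI t ht).2.1
      have hbdd : BddAbove {n | ∃ T ⊆ Finset.univ, M.Indep T ∧ T.card = n} := by
        refine ⟨Fintype.card E, ?_⟩
        rintro n ⟨T, -, -, rfl⟩
        exact Finset.card_le_univ T
      exact le_csSup hbdd ⟨I t, Finset.subset_univ _, hind, rfl⟩
    refine le_trans (Finset.sum_le_card_nsmul _ _ (M.rank Finset.univ) hbound) ?_
    rw [Nat.card_Icc]
    simp [smul_eq_mul]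
  -- Part 2 : main inequality
  have hmain : (1 - (1 - p) ^ τ) * Ex p univ (fun A => optW M w A) ≤
      Ex p univ (fun A => optW M w (Q ∩ A)) := by
    rw [hQ]
    exact MAIN p hp0 hp1 τ I ((univ.image w).filter (fun v => 0 < v)).card w hw (le_refl _) hI
  have hbridge1 : expec (fun _ => p) (fun A => bestVal {T | M.Indep T} (setWeight w) A) =
      Ex p univ (fun A => optW M w A) := by
    rw [expec_eq_Ex]
    rfl
  have hbridge2 : expec (fun _ => p) (fun A => bestVal {T | M.Indep T} (setWeight w) (Q ∩ A)) =
      Ex p univ (fun A => optW M w (Q ∩ A)) := by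
    rw [expec_eq_Ex]
    rfl
  refine ⟨hcard, ?_, ?_⟩
  · rw [hbridge1, hbridge2]
    exact hmain
  · intro ε hε0 hε1 hτε
    rw [hbridge1, hbridge2]
    by_cases hp : p = 0
    · subst hp
      rw [ex_pzero, ex_pzero, Finset.inter_empty, optW_empty]
      linarith
    · have hppos : 0 < p := lt_of_le_of_ne hp0 (Ne.symm hp)
      have hlog : Real.log (1 / ε) ≤ p * τ := by
        have h1 := mul_le_mul_of_nonneg_left hτε hp0
        have h2 : p * ((1 / p) * Real.log (1 / ε)) = Real.log (1 / ε) := by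
          field_simp
        rw [h2] at h1
        exact h1
      have hexp : (1 - p) ^ τ ≤ ε := by
        have h1 : (1 - p : ℝ) ≤ Real.exp (-p) := by
          have := Real.add_one_le_exp (-p)
          linarith
        have h2 : (1 - p) ^ τ ≤ (Real.exp (-p)) ^ τ :=
          pow_le_pow_left₀ (by linarith) h1 τ
        have h3 : (Real.exp (-p)) ^ τ = Real.exp (-(p * τ)) := by
          rw [← Real.exp_nat_mul]
          ring_nf
        have h4 : Real.exp (-(p * τ)) ≤ ε := by
          rw [← Real.exp_log hε0]
          apply Real.exp_le_exp.2
          have h5 : Real.log (1 / ε) = - Real.log ε := by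
            rw [one_div, Real.log_inv]
          linarith
        calc (1 - p) ^ τ ≤ (Real.exp (-p)) ^ τ := h2
        _ = Real.exp (-(p * τ)) := h3
        _ ≤ ε := h4
      have hEX : 0 ≤ Ex p univ (fun A => optW M w A) :=
        ex_nonneg hp0 hp1 fun A _ => optW_nonneg M w A
      have h6 : (1 - ε) * Ex p univ (fun A => optW M w A) ≤
          (1 - (1 - p) ^ τ) * Ex p univ (fun A => optW M w A) := by
        apply mul_le_mul_of_nonneg_right _ hEX
        linarith
      exact h6.trans hmain
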